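/- Let n ≥ 3, let G = D_{2n} = ⟨a, b | a^n = b^2 = 1, bab = a^{-1}⟩, and let k be an integer with 1 ≤ k ≤ n-2, gcd(k, n) = 1 and n dividing 1 + k + k^2 + k^3. Set C = {b, ba, ba^{k+1}, ba^{k^2+k+1}} (exponents read modulo n). Then |C| = 4, C is a transitive inverse-closed generating set of G on which Aut(G;C) acts transitively, and: if k = n/2 - 1 and n ≡ 0 (mod 4), then Aut(G;C) = ⟨τ_{n/2+1}, τ_{n/2-1}φ⟩ is isomorphic to the dihedral group of order 8; otherwise Aut(G;C) = ⟨τ_kφ⟩ is cyclic of order 4. -/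

import Mathlib

namespace NETCayley

variable {G : Type*} [Group G]

/-- `Aut(G;C)`: the subgroup of `MulAut G` consisting of automorphisms `σ` with `C^σ = C`. -/
def autSub (C : Set G) : Subgroup (MulAut G) where
  carrier := {σ : MulAut G | ⇑σ '' C = C}
  one_mem' := by simp
  mul_mem' := by
    intro a b ha hb
    rw [Set.mem_setOf_eq] at ha hb ⊢
    have h : ⇑(a * b) = ⇑a ∘ ⇑b := rfl
    rw [h, Set.image_comp, hb, ha]
  inv_mem' := by
    intro a ha
    rw [Set.mem_setOf_eq] at ha ⊢
    conv_lhs => rw [← ha]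
    rw [← Set.image_comp]
    have h : ⇑a⁻¹ ∘ ⇑a = id := by funext x; simp
    rw [h, Set.image_id]

/-- `A(G;C)`: proper normal `Aut(G;C)`-invariant subgroups of `G`. -/
def setA (C : Set G) : Set (Subgroup G) :=
  {N | N.Normal ∧ N ≠ ⊤ ∧ ∀ σ ∈ autSub C, N.map (σ : MulAut G).toMonoidHom = N}

/-- `A_max(G;C)`: maximal (by inclusion) elements of `A(G;C)`. -/
def setAmax (C : Set G) : Set (Subgroup G) :=
  {N | N ∈ setA C ∧ ∀ M ∈ setA C, N ≤ M → N = M}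

/-- `Φ(G;C)`: the intersection of all members of `A_max(G;C)`. -/
def PhiC (C : Set G) : Subgroup G := sInf (setAmax C)

/-- `X` is normal `C`-closed: `(x^g)^σ ∈ X` for all `x ∈ X`, `g ∈ G`, `σ ∈ Aut(G;C)`. -/
def NormalCClosed (C X : Set G) : Prop :=
  ∀ x ∈ X, ∀ g : G, ∀ σ ∈ autSub C, σ (g⁻¹ * x * g) ∈ X

/-- The normal `C`-closure of `X`: `{(x^g)^σ : x ∈ X, g ∈ G, σ ∈ Aut(G;C)}`. -/
def normalCClosure (C X : Set G) : Set G :=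
  {y | ∃ x ∈ X, ∃ g : G, ∃ σ ∈ autSub C, σ (g⁻¹ * x * g) = y}

/-- The orbit of `c` under the natural action of `Aut(G;C)`. -/
def orbitC (C : Set G) (c : G) : Set G := {y | ∃ σ ∈ autSub C, σ c = y}

/-- `C` is a transitive set: either `Aut(G;C)` is transitive on `C`, or there are exactly two
orbits `C₊`, `C₋` on `C` with `C = C₊ ∪ C₋` and `C₋ = C₊⁻¹`. -/
def TransSet (C : Set G) : Prop :=
  (∀ c ∈ C, ∀ c' ∈ C, ∃ σ ∈ autSub C, σ c = c') ∨
  (∃ cp ∈ C, ∃ cm ∈ C, orbitC C cp ≠ orbitC C cm ∧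
    C = orbitC C cp ∪ orbitC C cm ∧ orbitC C cm = (orbitC C cp)⁻¹)

/-- A transitive inverse-closed generating set of `G`. -/
def IsTransGenSet (C : Set G) : Prop :=
  (1 : G) ∉ C ∧ (∀ c ∈ C, c⁻¹ ∈ C) ∧ Subgroup.closure C = ⊤ ∧ TransSet C

/-- The map underlying the automorphism `τ_k φ^m` of the dihedral group:
`a^i ↦ a^{ki}`, `b a^i ↦ b a^{ki+m}`. -/
def dihMap (n : ℕ) (k m : ZMod n) : DihedralGroup n → DihedralGroup n
  | .r i => .r (k * i)
  | .sr i => .sr (k * i + m)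

/-- The automorphism `τ_k φ^m` of the dihedral group (for `k` a unit mod `n`). -/
def dihAut (n : ℕ) (k : (ZMod n)ˣ) (m : ZMod n) : MulAut (DihedralGroup n) where
  toFun := dihMap n (k : ZMod n) m
  invFun := dihMap n ((k⁻¹ : (ZMod n)ˣ) : ZMod n) (-(((k⁻¹ : (ZMod n)ˣ) : ZMod n) * m))
  left_inv := by
    have hk : ((k⁻¹ : (ZMod n)ˣ) : ZMod n) * ((k : (ZMod n)ˣ) : ZMod n) = 1 := k.inv_mul
    rintro (i | i) <;> simp only [dihMap] <;> congr 1 <;> linear_combination (i : ZMod n) * hk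
  right_inv := by
    have hk : ((k : (ZMod n)ˣ) : ZMod n) * ((k⁻¹ : (ZMod n)ˣ) : ZMod n) = 1 := k.mul_inv
    rintro (i | i) <;> simp only [dihMap] <;> congr 1
    · linear_combination (i : ZMod n) * hk
    · linear_combination ((i : ZMod n) - m) * hk
  map_mul' := by
    rintro (i | i) (j | j) <;>
      simp only [DihedralGroup.r_mul_r, DihedralGroup.r_mul_sr, DihedralGroup.sr_mul_r,
        DihedralGroup.sr_mul_sr, dihMap] <;> congr 1 <;> ring


set_option linter.dupNamespace false

private lemma cls {R : Type*} [CommRing R] (K u m : R)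
    (hP : 1 + K + K^2 + K^3 = 0)
    (h1 : (1:R) ≠ 0)
    (hm : m = 0 ∨ m = 1 ∨ m = K+1 ∨ m = K^2+K+1)
    (h1m : u + m = 0 ∨ u + m = 1 ∨ u + m = K+1 ∨ u + m = K^2+K+1)
    (hdm : u*(K+1) + m = 0 ∨ u*(K+1) + m = 1 ∨ u*(K+1) + m = K+1 ∨ u*(K+1) + m = K^2+K+1)
    (hsm : u*(K^2+K+1) + m = 0 ∨ u*(K^2+K+1) + m = 1 ∨ u*(K^2+K+1) + m = K+1 ∨ u*(K^2+K+1) + m = K^2+K+1)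
    (ne01 : m ≠ u + m) (ne0d : m ≠ u*(K+1) + m) (ne0s : m ≠ u*(K^2+K+1) + m)
    (ne1d : u + m ≠ u*(K+1) + m) (ne1s : u + m ≠ u*(K^2+K+1) + m)
    (neds : u*(K+1) + m ≠ u*(K^2+K+1) + m) :
    (u = 1 ∧ m = 0) ∨ (u = K ∧ m = 1) ∨ (u = K^2 ∧ m = K+1) ∨ (u = K^3 ∧ m = K^2+K+1) ∨
    ((K+1)^2 = 0 ∧ ((u = -1 ∧ m = 1) ∨ (u = -(K^2) ∧ m = K^2+K+1) ∨
      (u = -K ∧ m = K+1) ∨ (u = -(K^3) ∧ m = 0))) := by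
  rcases hm with hm | hm | hm | hm <;> subst hm <;>
      rcases h1m with h1m | h1m | h1m | h1m
  · exact (ne01 h1m.symm).elim
  · have hu : u = 1 := by linear_combination h1m
    rw [hu] at h1m hdm hsm ne0d ne0s ne1d ne1s neds
    rcases hdm with hdm | hdm | hdm | hdm
    · exact (ne0d hdm.symm).elim
    · exact (ne1d (h1m.trans hdm.symm)).elim
    · rcases hsm with hsm | hsm | hsm | hsm
      · exact (ne0s hsm.symm).elim
      · exact (ne1s (h1m.trans hsm.symm)).elim
      · exact (neds (hdm.trans hsm.symm)).elim
      · exact Or.inl ⟨hu, rfl⟩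
    · rcases hsm with hsm | hsm | hsm | hsm
      · exact (ne0s hsm.symm).elim
      · exact (ne1s (h1m.trans hsm.symm)).elim
      · exact (h1 (by linear_combination ((-1:R)*K^2) * hdm + ((0:R)) * hsm + ((1:R) + (-1:R)*K) * hP)).elim
      · exact (neds (hdm.trans hsm.symm)).elim
  · have hu : u = K+1 := by linear_combination h1m
    rw [hu] at h1m hdm hsm ne0d ne0s ne1d ne1s neds
    rcases hdm with hdm | hdm | hdm | hdm
    · exact (ne0d hdm.symm).elim
    · rcases hsm with hsm | hsm | hsm | hsm
      · exact (ne0s hsm.symm).elim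
      · exact (neds (hdm.trans hsm.symm)).elim
      · exact (ne1s (h1m.trans hsm.symm)).elim
      · exact (h1 (by linear_combination ((-2:R) + (-1:R)*K^2 + (2:R)*K^3) * hdm + ((4:R)) * hsm + ((1:R) + (-1:R)*K + (-2:R)*K^2) * hP)).elim
    · exact (ne1d (h1m.trans hdm.symm)).elim
    · rcases hsm with hsm | hsm | hsm | hsm
      · exact (ne0s hsm.symm).elim
      · exact (h1 (by linear_combination ((1:R)*K^3) * hdm + ((0:R)) * hsm + ((1:R) + (-1:R)*K) * hP)).elim
      · exact (ne1s (h1m.trans hsm.symm)).elim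
      · exact (neds (hdm.trans hsm.symm)).elim
  · have hu : u = -(K^3) := by linear_combination h1m + hP
    rw [hu] at h1m hdm hsm ne0d ne0s ne1d ne1s neds
    rcases hdm with hdm | hdm | hdm | hdm
    · exact (ne0d hdm.symm).elim
    · rcases hsm with hsm | hsm | hsm | hsm
      · exact (ne0s hsm.symm).elim
      · exact (neds (hdm.trans hsm.symm)).elim
      · exact (h1 (by linear_combination ((-17:R)*K + (-14:R)*K^2 + (-36:R)*K^3) * hdm + ((8:R) + (32:R)*K^2) * hsm + ((9:R) + (-18:R)*K + (27:R)*K^2 + (-14:R)*K^3 + (-4:R)*K^4) * hP)).elim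
      · exact (ne1s (h1m.trans hsm.symm)).elim
    · rcases hsm with hsm | hsm | hsm | hsm
      · exact (ne0s hsm.symm).elim
      · exact Or.inr (Or.inr (Or.inr (Or.inr ⟨by linear_combination ((-1:R)*K) * hdm + ((0:R)) * hsm + ((1:R) + (-1:R)*K^2) * hP, Or.inr (Or.inr (Or.inr ⟨hu, rfl⟩))⟩)))
      · exact (neds (hdm.trans hsm.symm)).elim
      · exact (ne1s (h1m.trans hsm.symm)).elim
    · exact (ne1d (h1m.trans hdm.symm)).elim
  · have hu : u = -1 := by linear_combination h1m
    rw [hu] at h1m hdm hsm ne0d ne0s ne1d ne1s neds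
    rcases hdm with hdm | hdm | hdm | hdm
    · exact (ne1d (h1m.trans hdm.symm)).elim
    · exact (ne0d hdm.symm).elim
    · rcases hsm with hsm | hsm | hsm | hsm
      · exact (ne1s (h1m.trans hsm.symm)).elim
      · exact (ne0s hsm.symm).elim
      · exact (neds (hdm.trans hsm.symm)).elim
      · exact (h1 (by linear_combination ((-17:R) + (-30:R)*K + (-68:R)*K^2 + (8:R)*K^3) * hdm + ((64:R)*K) * hsm + ((-16:R) + (16:R)*K) * hP)).elim
    · rcases hsm with hsm | hsm | hsm | hsm
      · exact (ne1s (h1m.trans hsm.symm)).elim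
      · exact (ne0s hsm.symm).elim
      · exact Or.inr (Or.inr (Or.inr (Or.inr ⟨by linear_combination ((-1:R)) * hdm + ((0:R)) * hsm + ((0:R)) * hP, Or.inl ⟨hu, rfl⟩⟩)))
      · exact (neds (hdm.trans hsm.symm)).elim
  · exact (ne01 h1m.symm).elim
  · have hu : u = K := by linear_combination h1m
    rw [hu] at h1m hdm hsm ne0d ne0s ne1d ne1s neds
    rcases hdm with hdm | hdm | hdm | hdm
    · rcases hsm with hsm | hsm | hsm | hsm
      · exact (neds (hdm.trans hsm.symm)).elim
      · exact (ne0s hsm.symm).elim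
      · exact (ne1s (h1m.trans hsm.symm)).elim
      · exact (h1 (by linear_combination ((1:R) + (-1:R)*K) * hdm + ((1:R)) * hsm + ((0:R)) * hP)).elim
    · exact (ne0d hdm.symm).elim
    · exact (ne1d (h1m.trans hdm.symm)).elim
    · rcases hsm with hsm | hsm | hsm | hsm
      · exact Or.inr (Or.inl ⟨hu, rfl⟩)
      · exact (ne0s hsm.symm).elim
      · exact (ne1s (h1m.trans hsm.symm)).elim
      · exact (neds (hdm.trans hsm.symm)).elim
  · have hu : u = K^2+K := by linear_combination h1m
    rw [hu] at h1m hdm hsm ne0d ne0s ne1d ne1s neds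
    rcases hdm with hdm | hdm | hdm | hdm
    · rcases hsm with hsm | hsm | hsm | hsm
      · exact (neds (hdm.trans hsm.symm)).elim
      · exact (ne0s hsm.symm).elim
      · exact (h1 (by linear_combination ((1:R)*K^2) * hdm + ((0:R)) * hsm + ((1:R) + (-1:R)*K + (-1:R)*K^2) * hP)).elim
      · exact (ne1s (h1m.trans hsm.symm)).elim
    · exact (ne0d hdm.symm).elim
    · rcases hsm with hsm | hsm | hsm | hsm
      · exact (h1 (by linear_combination ((2:R) + (13:R)*K + (8:R)*K^2 + (10:R)*K^3) * hdm + ((-14:R)*K) * hsm + ((1:R) + (13:R)*K + (-4:R)*K^2 + (-10:R)*K^3) * hP)).elim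
      · exact (ne0s hsm.symm).elim
      · exact (neds (hdm.trans hsm.symm)).elim
      · exact (ne1s (h1m.trans hsm.symm)).elim
    · exact (ne1d (h1m.trans hdm.symm)).elim
  · have hu : u = -(K+1) := by linear_combination h1m
    rw [hu] at h1m hdm hsm ne0d ne0s ne1d ne1s neds
    rcases hdm with hdm | hdm | hdm | hdm
    · exact (ne1d (h1m.trans hdm.symm)).elim
    · rcases hsm with hsm | hsm | hsm | hsm
      · exact (ne1s (h1m.trans hsm.symm)).elim
      · exact (neds (hdm.trans hsm.symm)).elim
      · exact (ne0s hsm.symm).elim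
      · exact (h1 (by linear_combination ((-1:R) + (2:R)*K + (1:R)*K^2) * hdm + ((-1:R)*K) * hsm + ((0:R)) * hP)).elim
    · exact (ne0d hdm.symm).elim
    · rcases hsm with hsm | hsm | hsm | hsm
      · exact (ne1s (h1m.trans hsm.symm)).elim
      · exact (h1 (by linear_combination ((1:R)) * hdm + ((2:R)*K) * hsm + ((2:R) + (2:R)*K) * hP)).elim
      · exact (ne0s hsm.symm).elim
      · exact (neds (hdm.trans hsm.symm)).elim
  · have hu : u = -K := by linear_combination h1m
    rw [hu] at h1m hdm hsm ne0d ne0s ne1d ne1s neds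
    rcases hdm with hdm | hdm | hdm | hdm
    · rcases hsm with hsm | hsm | hsm | hsm
      · exact (neds (hdm.trans hsm.symm)).elim
      · exact (ne1s (h1m.trans hsm.symm)).elim
      · exact (ne0s hsm.symm).elim
      · exact Or.inr (Or.inr (Or.inr (Or.inr ⟨by linear_combination ((1:R) + (1:R)*K) * hdm + ((-1:R)) * hsm + ((0:R)) * hP, Or.inr (Or.inr (Or.inl ⟨hu, rfl⟩))⟩)))
    · exact (ne1d (h1m.trans hdm.symm)).elim
    · exact (ne0d hdm.symm).elim
    · rcases hsm with hsm | hsm | hsm | hsm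
      · exact (h1 (by linear_combination ((-6:R) + (4:R)*K + (-1:R)*K^3) * hdm + ((8:R)*K^3) * hsm + ((1:R) + (-7:R)*K + (-2:R)*K^2 + (8:R)*K^3) * hP)).elim
      · exact (ne1s (h1m.trans hsm.symm)).elim
      · exact (ne0s hsm.symm).elim
      · exact (neds (hdm.trans hsm.symm)).elim
  · exact (ne01 h1m.symm).elim
  · have hu : u = K^2 := by linear_combination h1m
    rw [hu] at h1m hdm hsm ne0d ne0s ne1d ne1s neds
    rcases hdm with hdm | hdm | hdm | hdm
    · rcases hsm with hsm | hsm | hsm | hsm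
      · exact (neds (hdm.trans hsm.symm)).elim
      · exact Or.inr (Or.inr (Or.inl ⟨hu, rfl⟩))
      · exact (ne0s hsm.symm).elim
      · exact (ne1s (h1m.trans hsm.symm)).elim
    · rcases hsm with hsm | hsm | hsm | hsm
      · exact (h1 (by linear_combination ((1:R)*K + (1:R)*K^3) * hdm + ((-1:R)*K^2) * hsm + ((1:R) + (-1:R)*K) * hP)).elim
      · exact (neds (hdm.trans hsm.symm)).elim
      · exact (ne0s hsm.symm).elim
      · exact (ne1s (h1m.trans hsm.symm)).elim
    · exact (ne0d hdm.symm).elim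
    · exact (ne1d (h1m.trans hdm.symm)).elim
  · have hu : u = K^3 := by linear_combination h1m - hP
    rw [hu] at h1m hdm hsm ne0d ne0s ne1d ne1s neds
    rcases hdm with hdm | hdm | hdm | hdm
    · exact (ne1d (h1m.trans hdm.symm)).elim
    · rcases hsm with hsm | hsm | hsm | hsm
      · exact (ne1s (h1m.trans hsm.symm)).elim
      · exact (neds (hdm.trans hsm.symm)).elim
      · exact Or.inr (Or.inr (Or.inr (Or.inl ⟨hu, rfl⟩)))
      · exact (ne0s hsm.symm).elim
    · rcases hsm with hsm | hsm | hsm | hsm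
      · exact (ne1s (h1m.trans hsm.symm)).elim
      · exact (h1 (by linear_combination ((-1:R) + (-1:R)*K + (-1:R)*K^2) * hdm + ((2:R)*K^3) * hsm + ((1:R) + (-1:R)*K + (1:R)*K^2 + (1:R)*K^3 + (-2:R)*K^5) * hP)).elim
      · exact (neds (hdm.trans hsm.symm)).elim
      · exact (ne0s hsm.symm).elim
    · exact (ne0d hdm.symm).elim
  · have hu : u = -(K^2+K) := by linear_combination h1m
    rw [hu] at h1m hdm hsm ne0d ne0s ne1d ne1s neds
    rcases hdm with hdm | hdm | hdm | hdm
    · rcases hsm with hsm | hsm | hsm | hsm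
      · exact (neds (hdm.trans hsm.symm)).elim
      · exact (ne1s (h1m.trans hsm.symm)).elim
      · exact (h1 (by linear_combination ((-3:R) + (-3:R)*K + (-3:R)*K^2 + (-2:R)*K^3) * hdm + ((2:R)) * hsm + ((4:R) + (1:R)*K + (-3:R)*K^2 + (-2:R)*K^3) * hP)).elim
      · exact (ne0s hsm.symm).elim
    · exact (ne1d (h1m.trans hdm.symm)).elim
    · rcases hsm with hsm | hsm | hsm | hsm
      · exact (h1 (by linear_combination ((1:R)) * hdm + ((0:R)) * hsm + ((1:R)) * hP)).elim
      · exact (ne1s (h1m.trans hsm.symm)).elim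
      · exact (neds (hdm.trans hsm.symm)).elim
      · exact (ne0s hsm.symm).elim
    · exact (ne0d hdm.symm).elim
  · have hu : u = -(K^2) := by linear_combination h1m
    rw [hu] at h1m hdm hsm ne0d ne0s ne1d ne1s neds
    rcases hdm with hdm | hdm | hdm | hdm
    · rcases hsm with hsm | hsm | hsm | hsm
      · exact (neds (hdm.trans hsm.symm)).elim
      · exact (h1 (by linear_combination ((1:R) + (1:R)*K^3) * hdm + ((1:R)*K) * hsm + ((-1:R)*K + (1:R)*K^3) * hP)).elim
      · exact (ne1s (h1m.trans hsm.symm)).elim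
      · exact (ne0s hsm.symm).elim
    · rcases hsm with hsm | hsm | hsm | hsm
      · exact Or.inr (Or.inr (Or.inr (Or.inr ⟨by linear_combination ((1:R)) * hdm + ((0:R)) * hsm + ((1:R)) * hP, Or.inr (Or.inl ⟨hu, rfl⟩)⟩)))
      · exact (neds (hdm.trans hsm.symm)).elim
      · exact (ne1s (h1m.trans hsm.symm)).elim
      · exact (ne0s hsm.symm).elim
    · exact (ne1d (h1m.trans hdm.symm)).elim
    · exact (ne0d hdm.symm).elim
  · exact (ne01 h1m.symm).elim

section AuxNET
open DihedralGroup

variable {n : ℕ}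

theorem NETCayley.dihAut_apply_r (κ : (ZMod n)ˣ) (μ i : ZMod n) :
    NETCayley.dihAut n κ μ (r i) = r ((κ : ZMod n) * i) := rfl

/-- affine form of an automorphism of the dihedral group -/
def NETAff (n : ℕ) (σ : MulAut (DihedralGroup n)) (u m : ZMod n) : Prop :=
  (∀ i : ZMod n, σ (r i) = r (u * i)) ∧ (∀ i : ZMod n, σ (sr i) = sr (u * i + m))

theorem netAff_dihAut (κ : (ZMod n)ˣ) (μ : ZMod n) :
    NETAff n (NETCayley.dihAut n κ μ) (κ : ZMod n) μ :=
  ⟨fun _ => rfl, fun _ => rfl⟩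

theorem netAff_congr {σ : MulAut (DihedralGroup n)} {u m u' m' : ZMod n}
    (h : NETAff n σ u m) (hu : u = u') (hm : m = m') : NETAff n σ u' m' := by
  subst hu; subst hm; exact h

theorem netAff_one : NETAff n 1 1 0 :=
  ⟨fun i => by simp, fun i => by simp⟩

theorem netAff_mul {σ τ : MulAut (DihedralGroup n)} {u m u' m' : ZMod n}
    (h : NETAff n σ u m) (h' : NETAff n τ u' m') :
    NETAff n (σ * τ) (u * u') (u * m' + m) := by
  constructor <;> intro i
  · rw [MulAut.mul_apply, h'.1, h.1]; congr 1; ring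
  · rw [MulAut.mul_apply, h'.2, h.2]; congr 1; ring

theorem netAff_unique {σ τ : MulAut (DihedralGroup n)} {u m : ZMod n}
    (h : NETAff n σ u m) (h' : NETAff n τ u m) : σ = τ := by
  apply MulEquiv.ext; rintro (i | i)
  · rw [h.1, h'.1]
  · rw [h.2, h'.2]

theorem net_r_pow (u : ZMod n) (t : ℕ) : (r u : DihedralGroup n) ^ t = r (u * (t : ZMod n)) := by
  induction t with
  | zero => simp [-r_zero, one_def]
  | succ t ih =>
    rw [pow_succ, ih, r_mul_r]
    congr 1
    push_cast
    ring

theorem net_pow_mul_comm4 {H : Type*} [Group H] {S T : H} (hT : T ^ 2 = 1)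
    (hTS : T * S * T = S ^ 3) (a : ℕ) : S ^ a * T = T * S ^ (3 * a) := by
  have hTT : T * T = 1 := by rw [← pow_two]; exact hT
  have hST : S * T = T * S ^ 3 := by
    calc S * T = T * (T * S * T) := by rw [← mul_assoc, ← mul_assoc, hTT, one_mul]
    _ = T * S ^ 3 := by rw [hTS]
  induction a with
  | zero => simp
  | succ a ih =>
    calc S ^ (a + 1) * T = S ^ a * (S * T) := by rw [pow_succ, mul_assoc]
    _ = (S ^ a * T) * S ^ 3 := by rw [hST, mul_assoc]
    _ = (T * S ^ (3 * a)) * S ^ 3 := by rw [ih]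
    _ = T * S ^ (3 * (a + 1)) := by
        rw [mul_assoc, ← pow_add, Nat.mul_add, Nat.mul_one]

/-- homomorphism from `DihedralGroup 4` determined by dihedral relations -/
def netD8Hom {H : Type*} [Group H] (S T : H) (hS : S ^ 4 = 1) (hT : T ^ 2 = 1)
    (hTS : T * S * T = S ^ 3) : DihedralGroup 4 →* H where
  toFun x := match x with
    | .r i => S ^ i.val
    | .sr i => T * S ^ i.val
  map_one' := by
    show S ^ (0 : ZMod 4).val = 1
    simp [ZMod.val_zero]
  map_mul' := by
    have hpow : ∀ a b : ℕ, a % 4 = b % 4 → S ^ a = S ^ b := fun a b h => by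
      rw [pow_eq_pow_mod a hS, pow_eq_pow_mod b hS, h]
    have hcomm := net_pow_mul_comm4 hT hTS
    have hTT : T * T = 1 := by rw [← pow_two]; exact hT
    have hsub : ∀ i j : ZMod 4, (j - i).val % 4 = (3 * i.val + j.val) % 4 := by
      intro i j
      have h4 : (4 : ZMod 4) = 0 := by decide
      have : j - i = j + 3 * i := by linear_combination (-i) * h4
      rw [this, ZMod.val_add, ZMod.val_mul]
      have h3 : (3 : ZMod 4).val = 3 := rfl
      rw [h3]; omega
    rintro (i | i) (j | j)
    · show S ^ ((i + j).val) = S ^ i.val * S ^ j.val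
      rw [← pow_add]; exact hpow _ _ (by rw [ZMod.val_add]; omega)
    · show T * S ^ ((j - i).val) = S ^ i.val * (T * S ^ j.val)
      rw [← mul_assoc, hcomm, mul_assoc, ← pow_add]
      congr 1
      exact hpow _ _ (hsub i j)
    · show T * S ^ ((i + j).val) = (T * S ^ i.val) * S ^ j.val
      rw [mul_assoc, ← pow_add]
      congr 1
      exact hpow _ _ (by rw [ZMod.val_add]; omega)
    · show S ^ ((j - i).val) = (T * S ^ i.val) * (T * S ^ j.val)
      have : (T * S ^ i.val) * (T * S ^ j.val) = S ^ (3 * i.val + j.val) := by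
        rw [mul_assoc, ← mul_assoc (S ^ i.val), hcomm, ← mul_assoc, ← mul_assoc, hTT,
          one_mul, ← pow_add]
      rw [this]
      exact hpow _ _ (hsub i j)

@[simp] theorem netD8Hom_r {H : Type*} [Group H] (S T : H) (hS : S ^ 4 = 1) (hT : T ^ 2 = 1)
    (hTS : T * S * T = S ^ 3) (i : ZMod 4) : netD8Hom S T hS hT hTS (r i) = S ^ i.val := rfl

@[simp] theorem netD8Hom_sr {H : Type*} [Group H] (S T : H) (hS : S ^ 4 = 1) (hT : T ^ 2 = 1)
    (hTS : T * S * T = S ^ 3) (i : ZMod 4) : netD8Hom S T hS hT hTS (sr i) = T * S ^ i.val := rfl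

/-- homomorphism from `Multiplicative (ZMod 4)` determined by an element of order dividing 4 -/
def netC4Hom {H : Type*} [Group H] (S : H) (hS : S ^ 4 = 1) :
    Multiplicative (ZMod 4) →* H where
  toFun x := S ^ (Multiplicative.toAdd x).val
  map_one' := by
    show S ^ (0 : ZMod 4).val = 1
    simp [ZMod.val_zero]
  map_mul' := by
    intro x y
    show S ^ ((Multiplicative.toAdd x + Multiplicative.toAdd y).val) = _
    rw [← pow_add, pow_eq_pow_mod _ hS,
      pow_eq_pow_mod ((Multiplicative.toAdd x).val + (Multiplicative.toAdd y).val) hS]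
    congr 1
    rw [ZMod.val_add]; omega

@[simp] theorem netC4Hom_apply {H : Type*} [Group H] (S : H) (hS : S ^ 4 = 1)
    (x : Multiplicative (ZMod 4)) : netC4Hom S hS x = S ^ (Multiplicative.toAdd x).val := rfl

end AuxNET

set_option maxHeartbeats 1600000
/-- For `1 ≤ k ≤ n-2` with `gcd(k,n) = 1` and `n ∣ 1+k+k²+k³`, the set
`C = {b, ba, ba^{k+1}, ba^{k²+k+1}}` has size 4, is a transitive inverse-closed generating
set on which `Aut(G;C)` acts transitively, and `Aut(G;C)` is `D₈` if `k = n/2-1` and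
`n ≡ 0 (mod 4)`, and cyclic of order 4 otherwise. -/
theorem stmt14 (n : ℕ) (hn : 3 ≤ n) (k : ℕ) (hk1 : 1 ≤ k) (hk2 : k ≤ n - 2)
    (hgcd : Nat.Coprime k n) (hdvd : n ∣ 1 + k + k ^ 2 + k ^ 3)
    (C : Set (DihedralGroup n))
    (hCdef : C = {DihedralGroup.sr 0, DihedralGroup.sr 1,
      DihedralGroup.sr ((k + 1 : ℕ) : ZMod n),
      DihedralGroup.sr ((k ^ 2 + k + 1 : ℕ) : ZMod n)}) :
    C.ncard = 4 ∧ IsTransGenSet C ∧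
    (∀ c ∈ C, ∀ c' ∈ C, ∃ σ ∈ autSub C, σ c = c') ∧
    ((k = n / 2 - 1 ∧ n % 4 = 0) →
      ∃ u v : (ZMod n)ˣ, (u : ZMod n) = ((n / 2 + 1 : ℕ) : ZMod n) ∧
        (v : ZMod n) = ((n / 2 - 1 : ℕ) : ZMod n) ∧
        autSub C = Subgroup.closure {dihAut n u 0, dihAut n v 1} ∧
        Nonempty (autSub C ≃* DihedralGroup 4)) ∧
    (¬(k = n / 2 - 1 ∧ n % 4 = 0) →
      ∃ w : (ZMod n)ˣ, (w : ZMod n) = (k : ZMod n) ∧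
        autSub C = Subgroup.zpowers (dihAut n w 1) ∧
        Nonempty (autSub C ≃* Multiplicative (ZMod 4))) := by
  classical
  haveI : NeZero n := ⟨by omega⟩
  obtain ⟨K, hK⟩ : ∃ K : ZMod n, K = (k : ZMod n) := ⟨_, rfl⟩
  -- basic algebraic facts
  have hP : 1 + K + K ^ 2 + K ^ 3 = 0 := by
    have h0 : ((1 + k + k ^ 2 + k ^ 3 : ℕ) : ZMod n) = 0 :=
      (ZMod.natCast_eq_zero_iff _ n).mpr hdvd
    push_cast at h0
    rw [← hK] at h0
    linear_combination h0
  have h10 : (1 : ZMod n) ≠ 0 := by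
    have h : ((1 : ℕ) : ZMod n) ≠ 0 := by
      rw [Ne, ZMod.natCast_eq_zero_iff]
      intro hdd; have := Nat.le_of_dvd (by omega) hdd; omega
    simpa using h
  have h4 : K ^ 4 = 1 := by linear_combination (K - 1) * hP
  have hK0 : K ≠ 0 := fun h => h10 (by linear_combination hP - (1 + K + K ^ 2) * h)
  have hd0 : K + 1 ≠ 0 := by
    have h : ((k + 1 : ℕ) : ZMod n) ≠ 0 := by
      rw [Ne, ZMod.natCast_eq_zero_iff]
      intro hdd; have := Nat.le_of_dvd (by omega) hdd; omega
    intro hcon; apply h; push_cast; rw [← hK]; exact hcon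
  have hs0 : K ^ 2 + K + 1 ≠ 0 := by
    intro h
    have hK3 : K ^ 3 = 0 := by linear_combination hP - h
    exact h10 (by linear_combination -h4 + K * hK3)
  have h20 : (2 : ZMod n) ≠ 0 := by
    have h : ((2 : ℕ) : ZMod n) ≠ 0 := by
      rw [Ne, ZMod.natCast_eq_zero_iff]
      intro hdd; have := Nat.le_of_dvd (by omega) hdd; omega
    simpa using h
  have n01 : (0 : ZMod n) ≠ 1 := fun h => h10 h.symm
  have n0d : (0 : ZMod n) ≠ K + 1 := fun h => hd0 h.symm
  have n0s : (0 : ZMod n) ≠ K ^ 2 + K + 1 := fun h => hs0 h.symm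
  have n1d : (1 : ZMod n) ≠ K + 1 := fun h => hK0 (by linear_combination -h)
  have n1s : (1 : ZMod n) ≠ K ^ 2 + K + 1 := by
    intro h
    apply hd0
    have h2 : K ^ 2 + K = 0 := by linear_combination -h
    linear_combination K ^ 3 * h2 - (K + 1) * h4
  have nds : K + 1 ≠ K ^ 2 + K + 1 := by
    intro h
    have h2 : K ^ 2 = 0 := by linear_combination -h
    exact h10 (by linear_combination -h4 + K ^ 2 * h2)
  have hC' : C = {DihedralGroup.sr 0, DihedralGroup.sr 1, DihedralGroup.sr (K + 1),
      DihedralGroup.sr (K ^ 2 + K + 1)} := by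
    rw [hCdef]; push_cast; rw [← hK]
  have srne : ∀ a b : ZMod n, a ≠ b → (DihedralGroup.sr a : DihedralGroup n) ≠ DihedralGroup.sr b :=
    fun a b hab h => hab (DihedralGroup.sr.inj h)
  -- cardinality
  have hcard : C.ncard = 4 := by
    rw [hC', Set.ncard_insert_of_notMem (by
        simp only [Set.mem_insert_iff, Set.mem_singleton_iff]
        push_neg
        exact ⟨srne _ _ n01, srne _ _ n0d, srne _ _ n0s⟩) (Set.toFinite _),
      Set.ncard_insert_of_notMem (by
        simp only [Set.mem_insert_iff, Set.mem_singleton_iff]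
        push_neg
        exact ⟨srne _ _ n1d, srne _ _ n1s⟩) (Set.toFinite _),
      Set.ncard_insert_of_notMem (by
        simp only [Set.mem_singleton_iff]
        exact srne _ _ nds) (Set.toFinite _),
      Set.ncard_singleton]
  -- the distinguished automorphism
  set σ₀ : MulAut (DihedralGroup n) := dihAut n (ZMod.unitOfCoprime k hgcd) 1 with hσ₀def
  have hu0 : ((ZMod.unitOfCoprime k hgcd : (ZMod n)ˣ) : ZMod n) = K := by
    rw [ZMod.coe_unitOfCoprime, hK]
  have A1 : NETAff n σ₀ K 1 := netAff_congr (netAff_dihAut _ 1) hu0 rfl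
  have A2 : NETAff n (σ₀ ^ 2) (K ^ 2) (K + 1) := by
    rw [pow_two]
    exact netAff_congr (netAff_mul A1 A1) (by ring) (by ring)
  have A3 : NETAff n (σ₀ ^ 3) (K ^ 3) (K ^ 2 + K + 1) := by
    rw [pow_succ]
    exact netAff_congr (netAff_mul A2 A1) (by ring) (by ring)
  have A4 : NETAff n (σ₀ ^ 4) 1 0 := by
    rw [pow_succ]
    exact netAff_congr (netAff_mul A3 A1) (by linear_combination h4) (by linear_combination hP)
  have hσ4 : σ₀ ^ 4 = 1 := netAff_unique A4 netAff_one
  have himg : ∀ (σ : MulAut (DihedralGroup n)) (u m : ZMod n), NETAff n σ u m →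
      ⇑σ '' C = {DihedralGroup.sr (u * 0 + m), DihedralGroup.sr (u * 1 + m),
        DihedralGroup.sr (u * (K + 1) + m), DihedralGroup.sr (u * (K ^ 2 + K + 1) + m)} := by
    intro σ u m h
    rw [hC']
    simp only [Set.image_insert_eq, Set.image_singleton, h.2]
  have hσ₀mem : σ₀ ∈ autSub C := by
    show ⇑σ₀ '' C = C
    rw [himg σ₀ K 1 A1, hC',
      show K * 0 + 1 = (1 : ZMod n) by ring,
      show K * 1 + 1 = K + 1 by ring,
      show K * (K + 1) + 1 = K ^ 2 + K + 1 by ring,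
      show K * (K ^ 2 + K + 1) + 1 = (0 : ZMod n) by linear_combination hP]
    ext x
    simp only [Set.mem_insert_iff, Set.mem_singleton_iff]
    tauto
  -- extraction of the affine form of any element of `Aut(G;C)`
  have extract : ∀ σ : MulAut (DihedralGroup n), σ ∈ autSub C →
      ∃ u m : ZMod n, NETAff n σ u m ∧
        ((u = 1 ∧ m = 0) ∨ (u = K ∧ m = 1) ∨ (u = K ^ 2 ∧ m = K + 1) ∨
          (u = K ^ 3 ∧ m = K ^ 2 + K + 1) ∨
          ((K + 1) ^ 2 = 0 ∧ ((u = -1 ∧ m = 1) ∨ (u = -(K ^ 2) ∧ m = K ^ 2 + K + 1) ∨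
            (u = -K ∧ m = K + 1) ∨ (u = -(K ^ 3) ∧ m = 0)))) := by
    intro σ hσ
    have hmem : ∀ x, x ∈ C → σ x ∈ C := by
      intro x hx
      have himg' : ⇑σ '' C = C := hσ
      rw [← himg']
      exact Set.mem_image_of_mem _ hx
    have h0 : σ (DihedralGroup.sr 0) ∈ C := hmem _ (by rw [hC']; simp)
    have h1 : σ (DihedralGroup.sr 1) ∈ C := hmem _ (by rw [hC']; simp)
    rw [hC'] at h0 h1
    simp only [Set.mem_insert_iff, Set.mem_singleton_iff] at h0 h1
    have hm0 : ∃ m0 : ZMod n, σ (DihedralGroup.sr 0) = DihedralGroup.sr m0 := by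
      rcases h0 with h | h | h | h
      exacts [⟨0, h⟩, ⟨1, h⟩, ⟨_, h⟩, ⟨_, h⟩]
    obtain ⟨m0, hsr0⟩ := hm0
    have hm1 : ∃ m1 : ZMod n, σ (DihedralGroup.sr 1) = DihedralGroup.sr m1 := by
      rcases h1 with h | h | h | h
      exacts [⟨0, h⟩, ⟨1, h⟩, ⟨_, h⟩, ⟨_, h⟩]
    obtain ⟨m1, hsr1⟩ := hm1
    obtain ⟨u, hu⟩ : ∃ u : ZMod n, u = m1 - m0 := ⟨_, rfl⟩
    have hr1 : σ (DihedralGroup.r 1) = DihedralGroup.r u := by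
      have hr : (DihedralGroup.r 1 : DihedralGroup n) = DihedralGroup.sr 0 * DihedralGroup.sr 1 :=
        by rw [DihedralGroup.sr_mul_sr]; norm_num
      rw [hr, map_mul, hsr0, hsr1, DihedralGroup.sr_mul_sr, hu]
    have hri : ∀ i : ZMod n, σ (DihedralGroup.r i) = DihedralGroup.r (u * i) := by
      intro i
      have hi : (DihedralGroup.r i : DihedralGroup n) = (DihedralGroup.r 1) ^ (i.val) := by
        rw [DihedralGroup.r_one_pow]
        congr 1
        rw [ZMod.natCast_val, ZMod.cast_id]
      rw [hi, map_pow, hr1, net_r_pow]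
      congr 1
      rw [ZMod.natCast_val, ZMod.cast_id]
    have hsri : ∀ i : ZMod n, σ (DihedralGroup.sr i) = DihedralGroup.sr (u * i + m0) := by
      intro i
      have hi : (DihedralGroup.sr i : DihedralGroup n) = DihedralGroup.sr 0 * DihedralGroup.r i :=
        by rw [DihedralGroup.sr_mul_r, zero_add]
      rw [hi, map_mul, hsr0, hri, DihedralGroup.sr_mul_r]
      congr 1
      ring
    have hrow : ∀ a : ZMod n, (DihedralGroup.sr a : DihedralGroup n) ∈ C →
        (u * a + m0 = 0 ∨ u * a + m0 = 1 ∨ u * a + m0 = K + 1 ∨ u * a + m0 = K ^ 2 + K + 1) := by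
      intro a ha
      have h := hmem _ ha
      rw [hsri a, hC'] at h
      simpa only [Set.mem_insert_iff, Set.mem_singleton_iff, DihedralGroup.sr.injEq] using h
    have hmE : m0 = 0 ∨ m0 = 1 ∨ m0 = K + 1 ∨ m0 = K ^ 2 + K + 1 := by
      have h := hrow 0 (by rw [hC']; simp)
      rwa [show u * 0 + m0 = m0 from by ring] at h
    have h1m : u + m0 = 0 ∨ u + m0 = 1 ∨ u + m0 = K + 1 ∨ u + m0 = K ^ 2 + K + 1 := by
      have h := hrow 1 (by rw [hC']; simp)
      rwa [show u * 1 + m0 = u + m0 from by ring] at h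
    have hdm : u * (K + 1) + m0 = 0 ∨ u * (K + 1) + m0 = 1 ∨ u * (K + 1) + m0 = K + 1 ∨
        u * (K + 1) + m0 = K ^ 2 + K + 1 := hrow (K + 1) (by rw [hC']; simp)
    have hsm : u * (K ^ 2 + K + 1) + m0 = 0 ∨ u * (K ^ 2 + K + 1) + m0 = 1 ∨
        u * (K ^ 2 + K + 1) + m0 = K + 1 ∨ u * (K ^ 2 + K + 1) + m0 = K ^ 2 + K + 1 :=
      hrow (K ^ 2 + K + 1) (by rw [hC']; simp)
    have neAB : ∀ a b : ZMod n, a ≠ b → u * a + m0 ≠ u * b + m0 := by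
      intro a b hab h
      apply hab
      have h2 : σ (DihedralGroup.sr a) = σ (DihedralGroup.sr b) := by rw [hsri a, hsri b, h]
      exact DihedralGroup.sr.inj (σ.injective h2)
    exact ⟨u, m0, ⟨hri, hsri⟩,
      cls K u m0 hP h10 hmE h1m hdm hsm
        (fun h => neAB 0 1 n01 (by linear_combination h))
        (fun h => neAB 0 (K + 1) n0d (by linear_combination h))
        (fun h => neAB 0 (K ^ 2 + K + 1) n0s (by linear_combination h))
        (fun h => neAB 1 (K + 1) n1d (by linear_combination h))
        (fun h => neAB 1 (K ^ 2 + K + 1) n1s (by linear_combination h))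
        (fun h => neAB (K + 1) (K ^ 2 + K + 1) nds (by linear_combination h))⟩
  -- transitivity
  have reach : ∀ c ∈ C, ∃ j : ℕ, (σ₀ ^ j) (DihedralGroup.sr 0) = c := by
    intro c hc
    rw [hC'] at hc
    simp only [Set.mem_insert_iff, Set.mem_singleton_iff] at hc
    rcases hc with h | h | h | h
    · exact ⟨0, by rw [pow_zero, h]; simp⟩
    · exact ⟨1, by rw [pow_one, A1.2 0, h]; congr 1; ring⟩
    · exact ⟨2, by rw [A2.2 0, h]; congr 1; ring⟩
    · exact ⟨3, by rw [A3.2 0, h]; congr 1; ring⟩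
  have htrans : ∀ c ∈ C, ∀ c' ∈ C, ∃ σ ∈ autSub C, σ c = c' := by
    intro c hc c' hc'
    obtain ⟨j, hj⟩ := reach c hc
    obtain ⟨j', hj'⟩ := reach c' hc'
    refine ⟨σ₀ ^ j' * (σ₀ ^ j)⁻¹,
      mul_mem (pow_mem hσ₀mem j') (inv_mem (pow_mem hσ₀mem j)), ?_⟩
    rw [← hj, ← hj', MulAut.mul_apply]
    congr 1
    show ((σ₀ ^ j)⁻¹ * σ₀ ^ j) (DihedralGroup.sr 0) = DihedralGroup.sr 0
    rw [inv_mul_cancel]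
    simp
  -- arithmetic criterion for the extra reflection
  have reflIff : (K + 1) ^ 2 = 0 ↔ (k = n / 2 - 1 ∧ n % 4 = 0) := by
    constructor
    · intro h
      have hc : ((k + 1 : ℕ) : ZMod n) ^ 2 = 0 := by
        push_cast
        rw [← hK]
        linear_combination h
      rw [← Nat.cast_pow, ZMod.natCast_eq_zero_iff] at hc
      have hdvd1' : n ∣ (k + 1) * (k ^ 2 + 1) := by
        rwa [show 1 + k + k ^ 2 + k ^ 3 = (k + 1) * (k ^ 2 + 1) from by ring] at hdvd
      have h3 : n ∣ (k + 1) ^ 3 := by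
        have := hc.mul_left (k + 1)
        rwa [show (k + 1) * (k + 1) ^ 2 = (k + 1) ^ 3 from by ring] at this
      have h2k : n ∣ 2 * k * (k + 1) := by
        have he : (k + 1) ^ 3 = (k + 1) * (k ^ 2 + 1) + 2 * k * (k + 1) := by ring
        rw [he] at h3
        exact (Nat.dvd_add_right hdvd1').mp h3
      have h2d : n ∣ 2 * (k + 1) := by
        apply Nat.Coprime.dvd_of_dvd_mul_left (Nat.Coprime.symm hgcd)
        rwa [show k * (2 * (k + 1)) = 2 * k * (k + 1) from by ring]
      have hn2 : 2 * (k + 1) = n := by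
        obtain ⟨c, hcc⟩ := h2d
        have hc2 : c < 2 := by
          by_contra hcon
          push_neg at hcon
          have h2 : n * 2 ≤ n * c := Nat.mul_le_mul_left n hcon
          rw [← hcc] at h2
          omega
        interval_cases c
        · omega
        · omega
      obtain ⟨e, he⟩ := hc
      have hke : k + 1 = 2 * e := by
        have h2 : (k + 1) * (k + 1) = (k + 1) * (2 * e) := by
          rw [← pow_two, he, ← hn2]; ring
        exact Nat.eq_of_mul_eq_mul_left (by omega) h2
      omega
    · rintro ⟨hk', h4n⟩
      have hc : ((k + 1 : ℕ) : ZMod n) = K + 1 := by push_cast; rw [← hK]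
      rw [← hc, ← Nat.cast_pow, ZMod.natCast_eq_zero_iff]
      obtain ⟨t, rfl⟩ : ∃ t, n = 4 * t := ⟨n / 4, by omega⟩
      exact ⟨t, by rw [show k + 1 = 2 * t from by omega]; ring⟩
  -- evaluation tables for injectivity arguments
  have hval1 : σ₀ (DihedralGroup.sr 0) = DihedralGroup.sr 1 := by
    rw [A1.2 0]; congr 1; ring
  have hval2 : (σ₀ ^ 2) (DihedralGroup.sr 0) = DihedralGroup.sr (K + 1) := by
    rw [A2.2 0]; congr 1; ring
  have hval3 : (σ₀ ^ 3) (DihedralGroup.sr 0) = DihedralGroup.sr (K ^ 2 + K + 1) := by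
    rw [A3.2 0]; congr 1; ring
  have neval : ∀ a b : ℕ, a < 4 → b < 4 → σ₀ ^ a = σ₀ ^ b → a = b := by
    intro a b ha hb hab
    have hv := congrArg (fun f : MulAut (DihedralGroup n) => f (DihedralGroup.sr 0)) hab
    interval_cases a <;> interval_cases b <;>
      first
      | rfl
      | (simp only [pow_zero, pow_one, MulAut.one_apply, hval1, hval2, hval3,
          DihedralGroup.sr.injEq] at hv
         first
          | exact absurd hv n01 | exact absurd hv n01.symm
          | exact absurd hv n0d | exact absurd hv n0d.symm
          | exact absurd hv n0s | exact absurd hv n0s.symm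
          | exact absurd hv n1d | exact absurd hv n1d.symm
          | exact absurd hv n1s | exact absurd hv n1s.symm
          | exact absurd hv nds | exact absurd hv nds.symm)
  have hrpow : ∀ a : ℕ, (σ₀ ^ a) (DihedralGroup.r 1) = DihedralGroup.r (K ^ a) := by
    intro a
    induction a with
    | zero => simp
    | succ a ih =>
      rw [pow_succ', MulAut.mul_apply, ih, A1.1]
      congr 1
      ring
  refine ⟨hcard, ⟨?_, ?_, ?_, Or.inl htrans⟩, htrans, ?_, ?_⟩
  · -- 1 ∉ C
    rw [hC']
    simp [-DihedralGroup.r_zero, DihedralGroup.one_def]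
  · -- inverse closed
    intro c hc
    rw [hC'] at hc ⊢
    have hinv : ∀ a : ZMod n, (DihedralGroup.sr a : DihedralGroup n)⁻¹ = DihedralGroup.sr a :=
      fun a => rfl
    simp only [Set.mem_insert_iff, Set.mem_singleton_iff] at hc ⊢
    rcases hc with h | h | h | h <;> rw [h, hinv] <;> tauto
  · -- generating
    rw [Subgroup.eq_top_iff']
    intro x
    have h0C : (DihedralGroup.sr 0 : DihedralGroup n) ∈ C := by rw [hC']; simp
    have h1C : (DihedralGroup.sr 1 : DihedralGroup n) ∈ C := by rw [hC']; simp
    have hr1C : (DihedralGroup.r 1 : DihedralGroup n) ∈ Subgroup.closure C := by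
      have h : (DihedralGroup.r 1 : DihedralGroup n) = DihedralGroup.sr 0 * DihedralGroup.sr 1 :=
        by rw [DihedralGroup.sr_mul_sr]; norm_num
      rw [h]
      exact mul_mem (Subgroup.subset_closure h0C) (Subgroup.subset_closure h1C)
    have hriC : ∀ i : ZMod n, (DihedralGroup.r i : DihedralGroup n) ∈ Subgroup.closure C := by
      intro i
      have h : (DihedralGroup.r i : DihedralGroup n) = (DihedralGroup.r 1) ^ (i.val) := by
        rw [DihedralGroup.r_one_pow]
        congr 1
        rw [ZMod.natCast_val, ZMod.cast_id]
      rw [h]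
      exact pow_mem hr1C _
    rcases x with i | i
    · exact hriC i
    · have h : (DihedralGroup.sr i : DihedralGroup n) = DihedralGroup.sr 0 * DihedralGroup.r i :=
        by rw [DihedralGroup.sr_mul_r, zero_add]
      rw [h]
      exact mul_mem (Subgroup.subset_closure h0C) (hriC i)
  · -- the D8 case
    rintro ⟨hk', hn4⟩
    have hrefl : (K + 1) ^ 2 = 0 := reflIff.mpr ⟨hk', hn4⟩
    have hK2 : K ^ 2 = 1 := by linear_combination K * hrefl - hP
    set τ : MulAut (DihedralGroup n) := dihAut n (-(ZMod.unitOfCoprime k hgcd)) 0 with hτdef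
    have Aτ : NETAff n τ (-K) 0 :=
      netAff_congr (netAff_dihAut _ 0) (by rw [Units.val_neg, hu0]) rfl
    have hτmem : τ ∈ autSub C := by
      show ⇑τ '' C = C
      rw [himg τ (-K) 0 Aτ, hC',
        show -K * 0 + 0 = (0 : ZMod n) by ring,
        show -K * 1 + 0 = K ^ 2 + K + 1 by linear_combination -hrefl,
        show -K * (K + 1) + 0 = K + 1 by linear_combination -hrefl,
        show -K * (K ^ 2 + K + 1) + 0 = (1 : ZMod n) by linear_combination -hP]
      ext x
      simp only [Set.mem_insert_iff, Set.mem_singleton_iff]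
      tauto
    refine ⟨-(ZMod.unitOfCoprime k hgcd), ZMod.unitOfCoprime k hgcd, ?_, ?_, ?_, ?_⟩
    · rw [Units.val_neg, hu0]
      have hsum : (n / 2 + 1) + k = n := by omega
      have h : ((n / 2 + 1 : ℕ) : ZMod n) + K = 0 := by
        rw [hK, ← Nat.cast_add, hsum, ZMod.natCast_self]
      linear_combination -h
    · rw [hu0, hK, hk']
    · -- the subgroup equality
      apply le_antisymm
      · intro σ hσ
        obtain ⟨u', m', hAff, hcls⟩ := extract σ hσ
        have hSc : σ₀ ∈ Subgroup.closure ({τ, σ₀} : Set (MulAut (DihedralGroup n))) :=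
          Subgroup.subset_closure (by simp)
        have hTc : τ ∈ Subgroup.closure ({τ, σ₀} : Set (MulAut (DihedralGroup n))) :=
          Subgroup.subset_closure (by simp)
        rcases hcls with ⟨huu, hmm⟩ | ⟨huu, hmm⟩ | ⟨huu, hmm⟩ | ⟨huu, hmm⟩ | ⟨-, hsub⟩
        · rw [netAff_unique (netAff_congr hAff huu hmm) netAff_one]
          exact one_mem _
        · rw [netAff_unique (netAff_congr hAff huu hmm) A1]
          exact hSc
        · rw [netAff_unique (netAff_congr hAff huu hmm) A2]
          exact pow_mem hSc 2
        · rw [netAff_unique (netAff_congr hAff huu hmm) A3]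
          exact pow_mem hSc 3
        · rcases hsub with ⟨huu, hmm⟩ | ⟨huu, hmm⟩ | ⟨huu, hmm⟩ | ⟨huu, hmm⟩
          · have hA : NETAff n (τ * σ₀ ^ 3) (-1) 1 :=
              netAff_congr (netAff_mul Aτ A3) (by linear_combination -h4)
                (by linear_combination -hP)
            rw [netAff_unique (netAff_congr hAff huu hmm) hA]
            exact mul_mem hTc (pow_mem hSc 3)
          · have hA : NETAff n (τ * σ₀) (-(K ^ 2)) (K ^ 2 + K + 1) :=
              netAff_congr (netAff_mul Aτ A1) (by ring) (by linear_combination -hrefl)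
            rw [netAff_unique (netAff_congr hAff huu hmm) hA]
            exact mul_mem hTc hSc
          · have hA : NETAff n (τ * σ₀ ^ 2) (-K) (K + 1) :=
              netAff_congr (netAff_mul Aτ A2) (by linear_combination -K * hK2)
                (by linear_combination -hrefl)
            rw [netAff_unique (netAff_congr hAff huu hmm) hA]
            exact mul_mem hTc (pow_mem hSc 2)
          · have hA : NETAff n τ (-(K ^ 3)) 0 :=
              netAff_congr Aτ (by linear_combination K * hK2) rfl
            rw [netAff_unique (netAff_congr hAff huu hmm) hA]
            exact hTc
      · apply (Subgroup.closure_le _).mpr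
        rintro x hx
        simp only [Set.mem_insert_iff, Set.mem_singleton_iff] at hx
        rcases hx with rfl | rfl
        · exact hτmem
        · exact hσ₀mem
    · -- the isomorphism with D8
      have hτ2 : τ ^ 2 = 1 := by
        rw [pow_two]
        exact netAff_unique
          (netAff_congr (netAff_mul Aτ Aτ) (by linear_combination hK2) (by ring)) netAff_one
      have hτστ : τ * σ₀ * τ = σ₀ ^ 3 := by
        refine netAff_unique (netAff_congr (netAff_mul (netAff_mul Aτ A1) Aτ) ?_ ?_) A3
        · ring
        · linear_combination -hrefl
      set S' : ↥(autSub C) := ⟨σ₀, hσ₀mem⟩ with hS'def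
      set T' : ↥(autSub C) := ⟨τ, hτmem⟩ with hT'def
      have coePow : ∀ a : ℕ, ((S' ^ a : ↥(autSub C)) : MulAut (DihedralGroup n)) = σ₀ ^ a :=
        fun a => SubmonoidClass.coe_pow S' a
      have hS4 : S' ^ 4 = 1 := by
        apply Subtype.ext
        rw [coePow]
        exact hσ4
      have hT2 : T' ^ 2 = 1 := by
        apply Subtype.ext
        rw [SubmonoidClass.coe_pow]
        exact hτ2
      have hTS : T' * S' * T' = S' ^ 3 := by
        apply Subtype.ext
        rw [coePow]
        exact hτστ
      have hmix : ∀ a b : ℕ, σ₀ ^ a ≠ τ * σ₀ ^ b := by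
        intro a b h
        have hv := congrArg (fun f : MulAut (DihedralGroup n) => f (DihedralGroup.r 1)) h
        rw [hrpow a, MulAut.mul_apply, hrpow b, Aτ.1] at hv
        have hv' : K ^ a = -K * K ^ b := DihedralGroup.r.inj hv
        have hadd : K ^ a + K ^ (b + 1) = 0 := by
          rw [pow_succ']
          linear_combination hv'
        have hKpow : ∀ c : ℕ, K ^ c = 1 ∨ K ^ c = K := by
          intro c
          induction c with
          | zero => left; rw [pow_zero]
          | succ c ih =>
            rcases ih with h' | h'
            · right; rw [pow_succ, h', one_mul]
            · left; rw [pow_succ, h']; linear_combination hK2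
        rcases hKpow a with ha' | ha' <;> rcases hKpow (b + 1) with hb' | hb'
        · exact h20 (by linear_combination hadd - ha' - hb')
        · exact hd0 (by linear_combination hadd - ha' - hb')
        · exact hd0 (by linear_combination hadd - ha' - hb')
        · have h2K : 2 * K = 0 := by linear_combination hadd - ha' - hb'
          exact h20 (by linear_combination K ^ 3 * h2K - 2 * h4)
      have hvalinj : ∀ i j : ZMod 4, i.val = j.val → i = j := by
        intro i j h
        have h2 := congrArg (fun t : ℕ => (t : ZMod 4)) h
        simpa [ZMod.natCast_val, ZMod.cast_id] using h2
      have hg : Function.Bijective (netD8Hom S' T' hS4 hT2 hTS) := by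
        constructor
        · rintro (i | i) (j | j) h
          · rw [netD8Hom_r, netD8Hom_r] at h
            have hM : σ₀ ^ i.val = σ₀ ^ j.val := by
              have := congrArg (fun x : ↥(autSub C) => (x : MulAut (DihedralGroup n))) h
              simpa [coePow] using this
            rw [hvalinj i j (neval _ _ (ZMod.val_lt i) (ZMod.val_lt j) hM)]
          · exfalso
            rw [netD8Hom_r, netD8Hom_sr] at h
            apply hmix i.val j.val
            have := congrArg (fun x : ↥(autSub C) => (x : MulAut (DihedralGroup n))) h
            simpa [coePow] using this
          · exfalso
            rw [netD8Hom_r, netD8Hom_sr] at h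
            apply hmix j.val i.val
            have := congrArg (fun x : ↥(autSub C) => (x : MulAut (DihedralGroup n))) h.symm
            simpa [coePow] using this
          · rw [netD8Hom_sr, netD8Hom_sr] at h
            have h2 := mul_left_cancel h
            have hM : σ₀ ^ i.val = σ₀ ^ j.val := by
              have := congrArg (fun x : ↥(autSub C) => (x : MulAut (DihedralGroup n))) h2
              simpa [coePow] using this
            rw [hvalinj i j (neval _ _ (ZMod.val_lt i) (ZMod.val_lt j) hM)]
        · rintro ⟨σ, hσ⟩
          obtain ⟨u', m', hAff, hcls⟩ := extract σ hσ
          rcases hcls with ⟨huu, hmm⟩ | ⟨huu, hmm⟩ | ⟨huu, hmm⟩ | ⟨huu, hmm⟩ | ⟨-, hsub⟩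
          · refine ⟨DihedralGroup.r 0, Subtype.ext ?_⟩
            rw [netD8Hom_r, show ((0 : ZMod 4)).val = 0 from rfl, pow_zero,
              OneMemClass.coe_one]
            exact (netAff_unique netAff_one (netAff_congr hAff huu hmm))
          · refine ⟨DihedralGroup.r 1, Subtype.ext ?_⟩
            rw [netD8Hom_r, show ((1 : ZMod 4)).val = 1 from rfl, pow_one]
            exact (netAff_unique A1 (netAff_congr hAff huu hmm))
          · refine ⟨DihedralGroup.r 2, Subtype.ext ?_⟩
            rw [netD8Hom_r, show ((2 : ZMod 4)).val = 2 from rfl, coePow]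
            exact (netAff_unique A2 (netAff_congr hAff huu hmm))
          · refine ⟨DihedralGroup.r 3, Subtype.ext ?_⟩
            rw [netD8Hom_r, show ((3 : ZMod 4)).val = 3 from rfl, coePow]
            exact (netAff_unique A3 (netAff_congr hAff huu hmm))
          · rcases hsub with ⟨huu, hmm⟩ | ⟨huu, hmm⟩ | ⟨huu, hmm⟩ | ⟨huu, hmm⟩
            · refine ⟨DihedralGroup.sr 3, Subtype.ext ?_⟩
              rw [netD8Hom_sr, show ((3 : ZMod 4)).val = 3 from rfl, MulMemClass.coe_mul, coePow]
              refine (netAff_unique (netAff_congr (netAff_mul Aτ A3) ?_ ?_)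
                (netAff_congr hAff huu hmm))
              · linear_combination -h4
              · linear_combination -hP
            · refine ⟨DihedralGroup.sr 1, Subtype.ext ?_⟩
              rw [netD8Hom_sr, show ((1 : ZMod 4)).val = 1 from rfl, MulMemClass.coe_mul, coePow,
                pow_one]
              refine (netAff_unique (netAff_congr (netAff_mul Aτ A1) ?_ ?_)
                (netAff_congr hAff huu hmm))
              · ring
              · linear_combination -hrefl
            · refine ⟨DihedralGroup.sr 2, Subtype.ext ?_⟩
              rw [netD8Hom_sr, show ((2 : ZMod 4)).val = 2 from rfl, MulMemClass.coe_mul, coePow]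
              refine (netAff_unique (netAff_congr (netAff_mul Aτ A2) ?_ ?_)
                (netAff_congr hAff huu hmm))
              · linear_combination -K * hK2
              · linear_combination -hrefl
            · refine ⟨DihedralGroup.sr 0, Subtype.ext ?_⟩
              rw [netD8Hom_sr, show ((0 : ZMod 4)).val = 0 from rfl, MulMemClass.coe_mul, coePow,
                pow_zero, mul_one]
              refine (netAff_unique (netAff_congr Aτ ?_ rfl)
                (netAff_congr hAff huu hmm))
              linear_combination K * hK2
      exact ⟨(MulEquiv.ofBijective _ hg).symm⟩
  · -- the cyclic case
    intro hneg
    have hrefl' : (K + 1) ^ 2 ≠ 0 := fun h => hneg (reflIff.mp h)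
    refine ⟨ZMod.unitOfCoprime k hgcd, by rw [hu0, hK], ?_, ?_⟩
    · apply le_antisymm
      · intro σ hσ
        obtain ⟨u', m', hAff, hcls⟩ := extract σ hσ
        rcases hcls with ⟨huu, hmm⟩ | ⟨huu, hmm⟩ | ⟨huu, hmm⟩ | ⟨huu, hmm⟩ | ⟨hr2, -⟩
        · rw [netAff_unique (netAff_congr hAff huu hmm) netAff_one]
          exact one_mem _
        · rw [netAff_unique (netAff_congr hAff huu hmm) A1]
          exact Subgroup.mem_zpowers σ₀
        · rw [netAff_unique (netAff_congr hAff huu hmm) A2]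
          exact Subgroup.npow_mem_zpowers σ₀ 2
        · rw [netAff_unique (netAff_congr hAff huu hmm) A3]
          exact Subgroup.npow_mem_zpowers σ₀ 3
        · exact absurd hr2 hrefl'
      · exact Subgroup.zpowers_le.mpr hσ₀mem
    · set S' : ↥(autSub C) := ⟨σ₀, hσ₀mem⟩ with hS'def
      have coePow : ∀ a : ℕ, ((S' ^ a : ↥(autSub C)) : MulAut (DihedralGroup n)) = σ₀ ^ a :=
        fun a => SubmonoidClass.coe_pow S' a
      have hS4 : S' ^ 4 = 1 := by
        apply Subtype.ext
        rw [coePow]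
        exact hσ4
      have hvalinj : ∀ i j : ZMod 4, i.val = j.val → i = j := by
        intro i j h
        have h2 := congrArg (fun t : ℕ => (t : ZMod 4)) h
        simpa [ZMod.natCast_val, ZMod.cast_id] using h2
      have hf : Function.Bijective (netC4Hom S' hS4) := by
        constructor
        · intro x y h
          rw [netC4Hom_apply, netC4Hom_apply] at h
          have hM : σ₀ ^ (Multiplicative.toAdd x).val = σ₀ ^ (Multiplicative.toAdd y).val := by
            have := congrArg (fun z : ↥(autSub C) => (z : MulAut (DihedralGroup n))) h
            simpa [coePow] using this
          have := hvalinj _ _ (neval _ _ (ZMod.val_lt _) (ZMod.val_lt _) hM)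
          exact Multiplicative.toAdd.injective this
        · rintro ⟨σ, hσ⟩
          obtain ⟨u', m', hAff, hcls⟩ := extract σ hσ
          rcases hcls with ⟨huu, hmm⟩ | ⟨huu, hmm⟩ | ⟨huu, hmm⟩ | ⟨huu, hmm⟩ | ⟨hr2, -⟩
          · refine ⟨Multiplicative.ofAdd 0, Subtype.ext ?_⟩
            rw [netC4Hom_apply, show (Multiplicative.toAdd (Multiplicative.ofAdd (0 : ZMod 4))).val
              = 0 from rfl, pow_zero, OneMemClass.coe_one]
            exact (netAff_unique netAff_one (netAff_congr hAff huu hmm))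
          · refine ⟨Multiplicative.ofAdd 1, Subtype.ext ?_⟩
            rw [netC4Hom_apply, show (Multiplicative.toAdd (Multiplicative.ofAdd (1 : ZMod 4))).val
              = 1 from rfl, pow_one]
            exact (netAff_unique A1 (netAff_congr hAff huu hmm))
          · refine ⟨Multiplicative.ofAdd 2, Subtype.ext ?_⟩
            rw [netC4Hom_apply, show (Multiplicative.toAdd (Multiplicative.ofAdd (2 : ZMod 4))).val
              = 2 from rfl, coePow]
            exact (netAff_unique A2 (netAff_congr hAff huu hmm))
          · refine ⟨Multiplicative.ofAdd 3, Subtype.ext ?_⟩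
            rw [netC4Hom_apply, show (Multiplicative.toAdd (Multiplicative.ofAdd (3 : ZMod 4))).val
              = 3 from rfl, coePow]
            exact (netAff_unique A3 (netAff_congr hAff huu hmm))
          · exact absurd hr2 hrefl'
      exact ⟨(MulEquiv.ofBijective _ hf).symm⟩

end NETCayley
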